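/- arXiv:2106.12998 — 2 statements merged into one kernel-verified Lean document; each statement's English description precedes it below -/
import Mathlib

section
/- Let V: ℝⁿ → [0,∞), β > 0, and for f: ℝⁿ → ℝ define ‖f‖_{1+βV} = sup_x |f(x)|/(1+βV(x)) and the Lipschitz seminorm |||f|||_β = sup_{x≠y} |f(x)−f(y)|/d_β(x,y) where d_β(x,y) = 2 + βV(x) + βV(y) for x ≠ y. Then for every f with |||f|||_β < ∞, one has |||f|||_β = inf_{c∈ℝ} ‖f + c‖_{1+βV}. -/
open scoped ENNReal

/-- The weighted supremum norm `‖f‖_{1+βV}` (with values in `ℝ≥0∞`). -/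
noncomputable def weightedNorm {n : ℕ} (V : (Fin n → ℝ) → ℝ) (β : ℝ)
    (f : (Fin n → ℝ) → ℝ) : ℝ≥0∞ :=
  ⨆ x, ENNReal.ofReal (|f x| / (1 + β * V x))

/-- The Lipschitz seminorm associated with the metric
`d_β(x,y) = 2 + βV(x) + βV(y)` for `x ≠ y`. -/
noncomputable def lipSeminorm {n : ℕ} (V : (Fin n → ℝ) → ℝ) (β : ℝ)
    (f : (Fin n → ℝ) → ℝ) : ℝ≥0∞ :=
  ⨆ x, ⨆ y, ⨆ _ : x ≠ y, ENNReal.ofReal (|f x - f y| / (2 + β * V x + β * V y))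

theorem stmt12 {n : ℕ} (V : (Fin n → ℝ) → ℝ) (hV : ∀ x, 0 ≤ V x) (β : ℝ) (hβ : 0 < β)
    (f : (Fin n → ℝ) → ℝ) (hfin : lipSeminorm V β f ≠ ⊤) :
    lipSeminorm V β f = ⨅ c : ℝ, weightedNorm V β (fun x => f x + c) := by
  have hden : ∀ x : Fin n → ℝ, (0:ℝ) < 1 + β * V x := fun x => by nlinarith [hV x]
  have hD : ∀ x y : Fin n → ℝ, (0:ℝ) < 2 + β * V x + β * V y := fun x y => by
    nlinarith [hV x, hV y]
  set L := lipSeminorm V β f with hL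
  set ℓ := L.toReal with hl
  have hℓ0 : 0 ≤ ℓ := ENNReal.toReal_nonneg
  have key : ∀ x y, f x - f y ≤ ℓ * (2 + β * V x + β * V y) := by
    intro x y
    by_cases hxy : x = y
    · subst hxy
      have : (0:ℝ) ≤ ℓ * (2 + β * V x + β * V x) := mul_nonneg hℓ0 (by nlinarith [hV x])
      linarith
    · have h1 : ENNReal.ofReal (|f x - f y| / (2 + β * V x + β * V y)) ≤ L := by
        rw [hL, lipSeminorm]
        exact le_iSup_of_le x (le_iSup_of_le y (le_iSup_of_le hxy le_rfl))
      have h2 : |f x - f y| / (2 + β * V x + β * V y) ≤ ℓ := by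
        have h2' := ENNReal.toReal_mono hfin h1
        rwa [ENNReal.toReal_ofReal (div_nonneg (abs_nonneg _) (hD x y).le)] at h2'
      have h3 : |f x - f y| ≤ ℓ * (2 + β * V x + β * V y) := (div_le_iff₀ (hD x y)).mp h2
      calc f x - f y ≤ |f x - f y| := le_abs_self _
        _ ≤ _ := h3
  have x₀ : Fin n → ℝ := fun _ => 0
  set g : (Fin n → ℝ) → ℝ := fun x => -f x - ℓ * (1 + β * V x) with hg
  have hbdd : BddAbove (Set.range g) := by
    refine ⟨ℓ * (1 + β * V x₀) - f x₀, ?_⟩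
    rintro _ ⟨x, rfl⟩
    have := key x₀ x
    simp only [hg]
    nlinarith
  set c := sSup (Set.range g) with hc
  have hcu : ∀ x, g x ≤ c := fun x => le_csSup hbdd ⟨x, rfl⟩
  have hcl : ∀ x, c ≤ ℓ * (1 + β * V x) - f x := by
    intro x
    refine csSup_le ⟨g x₀, ⟨x₀, rfl⟩⟩ ?_
    rintro _ ⟨y, rfl⟩
    have := key x y
    simp only [hg]
    nlinarith
  have habs : ∀ x, |f x + c| ≤ ℓ * (1 + β * V x) := by
    intro x
    rw [abs_le]
    constructor
    · have h := hcu x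
      simp only [hg] at h
      linarith
    · have h := hcl x
      linarith
  apply le_antisymm
  · refine le_iInf fun d => ?_
    by_cases hW : weightedNorm V β (fun x => f x + d) = ⊤
    · rw [hW]; exact le_top
    · set w := (weightedNorm V β (fun x => f x + d)).toReal with hw
      have hwx : ∀ x, |f x + d| ≤ w * (1 + β * V x) := by
        intro x
        have h1 : ENNReal.ofReal (|f x + d| / (1 + β * V x))
            ≤ weightedNorm V β (fun x => f x + d) := by
          rw [weightedNorm]
          exact le_iSup_of_le x le_rfl
        have h2 := ENNReal.toReal_mono hW h1
        rw [ENNReal.toReal_ofReal (div_nonneg (abs_nonneg _) (hden x).le)] at h2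
        exact (div_le_iff₀ (hden x)).mp h2
      rw [hL, lipSeminorm]
      refine iSup_le fun x => iSup_le fun y => iSup_le fun hxy => ?_
      have h3 : |f x - f y| / (2 + β * V x + β * V y) ≤ w := by
        rw [div_le_iff₀ (hD x y)]
        calc |f x - f y| = |(f x + d) - (f y + d)| := by
              rw [show (f x + d) - (f y + d) = f x - f y from by ring]
          _ ≤ |f x + d| + |f y + d| := abs_sub _ _
          _ ≤ w * (1 + β * V x) + w * (1 + β * V y) := add_le_add (hwx x) (hwx y)
          _ = w * (2 + β * V x + β * V y) := by ring
      calc ENNReal.ofReal (|f x - f y| / (2 + β * V x + β * V y))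
          ≤ ENNReal.ofReal w := ENNReal.ofReal_le_ofReal h3
        _ = _ := ENNReal.ofReal_toReal hW
  · refine iInf_le_of_le c ?_
    rw [weightedNorm]
    refine iSup_le fun x => ?_
    have h4 : |f x + c| / (1 + β * V x) ≤ ℓ := by
      rw [div_le_iff₀ (hden x)]
      exact habs x
    calc ENNReal.ofReal (|f x + c| / (1 + β * V x))
        ≤ ENNReal.ofReal ℓ := ENNReal.ofReal_le_ofReal h4
      _ = L := ENNReal.ofReal_toReal hfin
end

section
/- Let P be a 2×2 matrix with strictly positive entries a, b, c, d. In the Hilbert projective metric θ(f,g) = |log(f₂g₁/(f₁g₂))| on the open positive quadrant, the Lipschitz constant of the projective action of P equals tanh(Δ/4), where Δ = |log(ad/(bc))|. -/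
/-- Hilbert's projective metric on the open positive quadrant of `ℝ²`. -/
noncomputable def hilbertTheta (f g : ℝ × ℝ) : ℝ :=
  |Real.log ((f.2 * g.1) / (f.1 * g.2))|

open Real

namespace Stmt15Aux

noncomputable def phi (a b c d x : ℝ) : ℝ :=
  Real.log (c + d * Real.exp x) - Real.log (a + b * Real.exp x)

lemma phi_hasDerivAt {a b c d : ℝ} (ha : 0 < a) (hb : 0 < b) (hc : 0 < c) (hd : 0 < d)
    (x : ℝ) :
    HasDerivAt (phi a b c d)
      ((a * d - b * c) * Real.exp x /
        ((c + d * Real.exp x) * (a + b * Real.exp x))) x := by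
  have hex : 0 < Real.exp x := Real.exp_pos x
  have h1 : HasDerivAt (fun y => c + d * Real.exp y) (d * Real.exp x) x := by
    simpa using ((Real.hasDerivAt_exp x).const_mul d).const_add c
  have h2 : HasDerivAt (fun y => a + b * Real.exp y) (b * Real.exp x) x := by
    simpa using ((Real.hasDerivAt_exp x).const_mul b).const_add a
  have hp1 : (0:ℝ) < c + d * Real.exp x := by positivity
  have hp2 : (0:ℝ) < a + b * Real.exp x := by positivity
  have := (h1.log hp1.ne').sub (h2.log hp2.ne')
  rw [show (a * d - b * c) * Real.exp x / ((c + d * Real.exp x) * (a + b * Real.exp x))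
      = d * Real.exp x / (c + d * Real.exp x) - b * Real.exp x / (a + b * Real.exp x) by
    rw [div_sub_div _ _ hp1.ne' hp2.ne']; ring]
  exact this

lemma key_ineq {a b c d u : ℝ} (ha : 0 < a) (hb : 0 < b) (hc : 0 < c) (hd : 0 < d)
    (hu : 0 < u) :
    (Real.sqrt (a*d) + Real.sqrt (b*c))^2 * u ≤ (c + d*u) * (a + b*u) := by
  have h1 : Real.sqrt (a*d) ^ 2 = a*d := Real.sq_sqrt (by positivity)
  have h2 : Real.sqrt (b*c) ^ 2 = b*c := Real.sq_sqrt (by positivity)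
  have h3 : Real.sqrt (a*c) ^ 2 = a*c := Real.sq_sqrt (by positivity)
  have h4 : Real.sqrt (b*d) ^ 2 = b*d := Real.sq_sqrt (by positivity)
  have h5 : Real.sqrt (a*d) * Real.sqrt (b*c) = Real.sqrt (a*c) * Real.sqrt (b*d) := by
    rw [← Real.sqrt_mul (by positivity), ← Real.sqrt_mul (by positivity)]
    ring_nf
  have h6 : 2 * (Real.sqrt (a*c) * Real.sqrt (b*d)) * u ≤ a*c + b*d*u^2 := by
    nlinarith [sq_nonneg (Real.sqrt (a*c) - Real.sqrt (b*d) * u)]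
  have e1 : Real.sqrt (a*d)^2 * u = a*d*u := by rw [h1]
  have e2 : Real.sqrt (b*c)^2 * u = b*c*u := by rw [h2]
  have e3 : Real.sqrt (a*d) * Real.sqrt (b*c) * u = Real.sqrt (a*c) * Real.sqrt (b*d) * u := by
    rw [h5]
  nlinarith [e1, e2, e3, h6]

/-- the bound on the derivative -/
lemma deriv_bound {a b c d u : ℝ} (ha : 0 < a) (hb : 0 < b) (hc : 0 < c) (hd : 0 < d)
    (hu : 0 < u) :
    |(a * d - b * c) * u / ((c + d*u) * (a + b*u))|
      ≤ |Real.sqrt (a*d) - Real.sqrt (b*c)| / (Real.sqrt (a*d) + Real.sqrt (b*c)) := by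
  set s := Real.sqrt (a*d) with hs
  set t := Real.sqrt (b*c) with ht
  have hs0 : 0 < s := Real.sqrt_pos.mpr (by positivity)
  have ht0 : 0 < t := Real.sqrt_pos.mpr (by positivity)
  have hs2 : s ^ 2 = a*d := Real.sq_sqrt (by positivity)
  have ht2 : t ^ 2 = b*c := Real.sq_sqrt (by positivity)
  have hden : (0:ℝ) < (c + d*u) * (a + b*u) := by positivity
  have hnum : |(a * d - b * c) * u| = |s - t| * (s + t) * u := by
    rw [abs_mul, abs_of_pos hu]
    congr 1
    have : a * d - b * c = (s - t) * (s + t) := by nlinarith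
    rw [this, abs_mul, abs_of_pos (show (0:ℝ) < s + t by linarith)]
  rw [abs_div, hnum, abs_of_pos hden, div_le_div_iff₀ hden (by linarith)]
  have hk := key_ineq ha hb hc hd hu
  nlinarith [mul_le_mul_of_nonneg_left hk (abs_nonneg (s - t))]

/-- the derivative attains the bound at u₀ = √(ac)/√(bd) -/
lemma deriv_attains {a b c d : ℝ} (ha : 0 < a) (hb : 0 < b) (hc : 0 < c) (hd : 0 < d) :
    |(a * d - b * c) * (Real.sqrt (a*c) / Real.sqrt (b*d)) /
      ((c + d * (Real.sqrt (a*c) / Real.sqrt (b*d))) *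
        (a + b * (Real.sqrt (a*c) / Real.sqrt (b*d))))|
      = |Real.sqrt (a*d) - Real.sqrt (b*c)| / (Real.sqrt (a*d) + Real.sqrt (b*c)) := by
  set s := Real.sqrt (a*d) with hsdef
  set t := Real.sqrt (b*c) with htdef
  set p := Real.sqrt (a*c) with hpdef
  set q := Real.sqrt (b*d) with hqdef
  have hs0 : 0 < s := Real.sqrt_pos.mpr (by positivity)
  have ht0 : 0 < t := Real.sqrt_pos.mpr (by positivity)
  have hp0 : 0 < p := Real.sqrt_pos.mpr (by positivity)
  have hq0 : 0 < q := Real.sqrt_pos.mpr (by positivity)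
  have hs2 : s ^ 2 = a*d := Real.sq_sqrt (by positivity)
  have ht2 : t ^ 2 = b*c := Real.sq_sqrt (by positivity)
  have hp2 : p ^ 2 = a*c := Real.sq_sqrt (by positivity)
  have hq2 : q ^ 2 = b*d := Real.sq_sqrt (by positivity)
  have hst : s * t = p * q := by
    rw [hsdef, htdef, hpdef, hqdef, ← Real.sqrt_mul (by positivity),
      ← Real.sqrt_mul (by positivity)]
    ring_nf
  set u := p / q with hu
  have hu0 : 0 < u := by positivity
  -- denominator equals (s+t)^2 * u
  have hkey : (c + d*u) * (a + b*u) = (s + t)^2 * u := by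
    have hbdu : b * d * u ^ 2 = a * c := by
      have : u ^ 2 = p^2 / q^2 := by rw [hu]; ring
      rw [this, hp2, hq2]
      field_simp
    have hstu : s * t * u = a * c := by
      have hpq : p * q * (p / q) = p ^ 2 := by field_simp
      rw [hst, hu, hpq, hp2]
    have e1 : s^2 * u = a*d*u := by rw [hs2]
    have e2 : t^2 * u = b*c*u := by rw [ht2]
    nlinarith [e1, e2, hstu, hbdu]
  have hden : (0:ℝ) < (c + d*u) * (a + b*u) := by positivity
  have hnum : |(a * d - b * c) * u| = |s - t| * (s + t) * u := by
    rw [abs_mul, abs_of_pos hu0]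
    congr 1
    have : a * d - b * c = (s - t) * (s + t) := by nlinarith
    rw [this, abs_mul, abs_of_pos (show (0:ℝ) < s + t by linarith)]
  rw [abs_div, hnum, abs_of_pos hden, hkey]
  rw [div_eq_div_iff (by positivity) (by positivity)]
  ring

/-- log form of hilbertTheta composed with the matrix, via phi -/
lemma theta_image {a b c d : ℝ} (ha : 0 < a) (hb : 0 < b) (hc : 0 < c) (hd : 0 < d)
    {f g : ℝ × ℝ} (hf1 : 0 < f.1) (hf2 : 0 < f.2) (hg1 : 0 < g.1) (hg2 : 0 < g.2) :
    hilbertTheta (a * f.1 + b * f.2, c * f.1 + d * f.2)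
        (a * g.1 + b * g.2, c * g.1 + d * g.2)
      = |phi a b c d (Real.log f.2 - Real.log f.1)
          - phi a b c d (Real.log g.2 - Real.log g.1)| := by
  have hef : Real.exp (Real.log f.2 - Real.log f.1) = f.2 / f.1 := by
    rw [Real.exp_sub, Real.exp_log hf2, Real.exp_log hf1]
  have heg : Real.exp (Real.log g.2 - Real.log g.1) = g.2 / g.1 := by
    rw [Real.exp_sub, Real.exp_log hg2, Real.exp_log hg1]
  have e1 : c + d * Real.exp (Real.log f.2 - Real.log f.1) = (c * f.1 + d * f.2) / f.1 := by
    rw [hef]; field_simp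
  have e2 : a + b * Real.exp (Real.log f.2 - Real.log f.1) = (a * f.1 + b * f.2) / f.1 := by
    rw [hef]; field_simp
  have e3 : c + d * Real.exp (Real.log g.2 - Real.log g.1) = (c * g.1 + d * g.2) / g.1 := by
    rw [heg]; field_simp
  have e4 : a + b * Real.exp (Real.log g.2 - Real.log g.1) = (a * g.1 + b * g.2) / g.1 := by
    rw [heg]; field_simp
  unfold hilbertTheta phi
  rw [e1, e2, e3, e4]
  have p1 : (0:ℝ) < c * f.1 + d * f.2 := by positivity
  have p2 : (0:ℝ) < a * f.1 + b * f.2 := by positivity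
  have p3 : (0:ℝ) < c * g.1 + d * g.2 := by positivity
  have p4 : (0:ℝ) < a * g.1 + b * g.2 := by positivity
  rw [Real.log_div (by positivity) (by positivity), Real.log_mul p1.ne' p4.ne',
    Real.log_mul p2.ne' p3.ne', Real.log_div p1.ne' hf1.ne', Real.log_div p2.ne' hf1.ne',
    Real.log_div p3.ne' hg1.ne', Real.log_div p4.ne' hg1.ne']
  congr 1
  ring

lemma theta_eq {f g : ℝ × ℝ} (hf1 : 0 < f.1) (hf2 : 0 < f.2) (hg1 : 0 < g.1)
    (hg2 : 0 < g.2) :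
    hilbertTheta f g
      = |(Real.log f.2 - Real.log f.1) - (Real.log g.2 - Real.log g.1)| := by
  unfold hilbertTheta
  rw [Real.log_div (by positivity) (by positivity), Real.log_mul hf2.ne' hg1.ne',
    Real.log_mul hf1.ne' hg2.ne']
  congr 1
  ring

lemma tanh_half_log {r : ℝ} (hr : 0 < r) :
    Real.tanh (Real.log r / 2) = (r - 1) / (r + 1) := by
  have hx : Real.exp (Real.log r / 2) = Real.sqrt r := by
    rw [show Real.sqrt r = r ^ ((1:ℝ)/2) from Real.sqrt_eq_rpow r,
      Real.rpow_def_of_pos hr]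
    ring_nf
  have hxn : Real.exp (-(Real.log r / 2)) = (Real.sqrt r)⁻¹ := by
    rw [Real.exp_neg, hx]
  have hsq : Real.sqrt r ^ 2 = r := Real.sq_sqrt hr.le
  have hs0 : 0 < Real.sqrt r := Real.sqrt_pos.mpr hr
  rw [Real.tanh_eq_sinh_div_cosh, Real.sinh_eq, Real.cosh_eq, hx, hxn]
  rw [div_eq_div_iff (by positivity) (by positivity)]
  field_simp
  rw [hsq]

/-- The RHS equals the Lipschitz constant K. -/
lemma tanh_eq_K {a b c d : ℝ} (ha : 0 < a) (hb : 0 < b) (hc : 0 < c) (hd : 0 < d) :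
    Real.tanh (|Real.log ((a * d) / (b * c))| / 4)
      = |Real.sqrt (a*d) - Real.sqrt (b*c)| / (Real.sqrt (a*d) + Real.sqrt (b*c)) := by
  set s := Real.sqrt (a*d) with hsdef
  set t := Real.sqrt (b*c) with htdef
  have hs0 : 0 < s := Real.sqrt_pos.mpr (by positivity)
  have ht0 : 0 < t := Real.sqrt_pos.mpr (by positivity)
  have hlog : Real.log ((a*d)/(b*c)) = 2 * (Real.log s - Real.log t) := by
    rw [Real.log_div (by positivity) (by positivity)]
    rw [hsdef, htdef, Real.log_sqrt (by positivity), Real.log_sqrt (by positivity)]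
    ring
  rw [hlog]
  rcases le_or_gt t s with h | h
  · have habs : |2 * (Real.log s - Real.log t)| = 2 * (Real.log s - Real.log t) := by
      rw [abs_of_nonneg]
      have := Real.log_le_log ht0 h
      linarith
    have hr : Real.log s - Real.log t = Real.log (s / t) := (Real.log_div hs0.ne' ht0.ne').symm
    rw [habs, hr, show 2 * Real.log (s/t) / 4 = Real.log (s/t) / 2 by ring,
      tanh_half_log (by positivity), abs_of_nonneg (by linarith)]
    rw [div_eq_div_iff (by positivity) (by positivity)]
    field_simp
    try ring
  · have habs : |2 * (Real.log s - Real.log t)| = 2 * (Real.log t - Real.log s) := by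
      rw [abs_of_nonpos]
      · ring
      have := Real.log_le_log hs0 h.le
      linarith
    have hr : Real.log t - Real.log s = Real.log (t / s) := (Real.log_div ht0.ne' hs0.ne').symm
    rw [habs, hr, show 2 * Real.log (t/s) / 4 = Real.log (t/s) / 2 by ring,
      tanh_half_log (by positivity), abs_of_neg (by linarith)]
    rw [div_eq_div_iff (by positivity) (by positivity)]
    field_simp
    try ring
    try tauto

end Stmt15Aux

open Stmt15Aux in
theorem stmt15 (a b c d : ℝ) (ha : 0 < a) (hb : 0 < b) (hc : 0 < c) (hd : 0 < d) :
    sSup {r : ℝ | ∃ f g : ℝ × ℝ,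
        0 < f.1 ∧ 0 < f.2 ∧ 0 < g.1 ∧ 0 < g.2 ∧ hilbertTheta f g ≠ 0 ∧
        r = hilbertTheta (a * f.1 + b * f.2, c * f.1 + d * f.2)
              (a * g.1 + b * g.2, c * g.1 + d * g.2) / hilbertTheta f g}
      = Real.tanh (|Real.log ((a * d) / (b * c))| / 4) := by
  set K := |Real.sqrt (a*d) - Real.sqrt (b*c)| / (Real.sqrt (a*d) + Real.sqrt (b*c)) with hK
  set S := {r : ℝ | ∃ f g : ℝ × ℝ,
      0 < f.1 ∧ 0 < f.2 ∧ 0 < g.1 ∧ 0 < g.2 ∧ hilbertTheta f g ≠ 0 ∧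
      r = hilbertTheta (a * f.1 + b * f.2, c * f.1 + d * f.2)
            (a * g.1 + b * g.2, c * g.1 + d * g.2) / hilbertTheta f g} with hS
  rw [tanh_eq_K ha hb hc hd, ← hK]
  -- reformulate S via phi
  have hSeq : S = {r : ℝ | ∃ x y : ℝ, x ≠ y ∧
      r = |phi a b c d x - phi a b c d y| / |x - y|} := by
    ext r
    constructor
    · rintro ⟨f, g, hf1, hf2, hg1, hg2, hθ, hr⟩
      refine ⟨Real.log f.2 - Real.log f.1, Real.log g.2 - Real.log g.1, ?_, ?_⟩
      · intro hxy
        apply hθ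
        rw [theta_eq hf1 hf2 hg1 hg2, hxy, sub_self, abs_zero]
      · rw [hr, theta_image ha hb hc hd hf1 hf2 hg1 hg2, theta_eq hf1 hf2 hg1 hg2]
    · rintro ⟨x, y, hxy, hr⟩
      refine ⟨(1, Real.exp x), (1, Real.exp y), one_pos, Real.exp_pos x, one_pos,
        Real.exp_pos y, ?_, ?_⟩
      · rw [theta_eq (f := (1, Real.exp x)) (g := (1, Real.exp y)) one_pos (Real.exp_pos x)
          one_pos (Real.exp_pos y)]
        simp only [Real.log_exp, Real.log_one]
        rw [sub_zero, sub_zero]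
        exact fun h => hxy (by rwa [abs_eq_zero, sub_eq_zero] at h)
      · rw [theta_image ha hb hc hd (f := (1, Real.exp x)) (g := (1, Real.exp y)) one_pos
          (Real.exp_pos x) one_pos (Real.exp_pos y),
          theta_eq (f := (1, Real.exp x)) (g := (1, Real.exp y)) one_pos (Real.exp_pos x)
          one_pos (Real.exp_pos y)]
        simp only [Real.log_exp, Real.log_one, sub_zero]
        exact hr
  rw [hSeq]
  -- Lipschitz bound for phi
  have hlip : ∀ x y : ℝ, |phi a b c d x - phi a b c d y| ≤ K * |x - y| := by
    intro x y
    have := Convex.norm_image_sub_le_of_norm_hasDerivWithin_le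
      (f := phi a b c d)
      (f' := fun x => (a * d - b * c) * Real.exp x /
        ((c + d * Real.exp x) * (a + b * Real.exp x)))
      (s := Set.univ) (C := K)
      (fun z _ => (phi_hasDerivAt ha hb hc hd z).hasDerivWithinAt)
      (fun z _ => by
        rw [Real.norm_eq_abs]
        exact deriv_bound ha hb hc hd (Real.exp_pos z))
      convex_univ (Set.mem_univ y) (Set.mem_univ x)
    simpa [Real.norm_eq_abs] using this
  -- the LUB
  apply IsLUB.csSup_eq
  · constructor
    · rintro r ⟨x, y, hxy, hr⟩
      have hxy' : (0:ℝ) < |x - y| := abs_pos.mpr (sub_ne_zero.mpr hxy)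
      rw [hr, div_le_iff₀ hxy']
      exact hlip x y
    · -- any upper bound M satisfies K ≤ M
      intro M hM
      set u₀ := Real.sqrt (a*c) / Real.sqrt (b*d) with hu₀
      have hu₀0 : 0 < u₀ := by positivity
      set x₀ := Real.log u₀ with hx₀
      have hexp : Real.exp x₀ = u₀ := Real.exp_log hu₀0
      have hder := phi_hasDerivAt ha hb hc hd x₀
      rw [hexp] at hder
      have hslope := hasDerivAt_iff_tendsto_slope.mp hder
      have htendsto : Filter.Tendsto (fun y => |slope (phi a b c d) x₀ y|)
          (nhdsWithin x₀ {x₀}ᶜ) (nhds K) := by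
        have := hslope.abs
        rwa [show |(a * d - b * c) * u₀ / ((c + d * u₀) * (a + b * u₀))| = K from
          deriv_attains ha hb hc hd] at this
      refine le_of_tendsto htendsto ?_
      filter_upwards [self_mem_nhdsWithin] with y hy
      have hyx : y ≠ x₀ := hy
      apply hM
      refine ⟨x₀, y, fun h => hyx h.symm, ?_⟩
      rw [slope_def_field]
      rw [abs_div]
      congr 1
      · rw [abs_sub_comm]
      · rw [abs_sub_comm]
  · -- nonempty
    refine ⟨|phi a b c d 0 - phi a b c d 1| / |0 - 1|, 0, 1, by norm_num, rfl⟩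
end
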